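/- A CAT(0) space X satisfies the geodesic extension property if and only if it satisfies the local geodesic extension property (i.e., every point has an open ball satisfying the geodesic extension property). -/

import Mathlib

open Set MeasureTheory Metric

def IsGeodesicSegment {X : Type*} [MetricSpace X] (γ : ℝ → X) : Prop :=
  ∀ s ∈ Set.Icc (0:ℝ) 1, ∀ t ∈ Set.Icc (0:ℝ) 1,
    dist (γ s) (γ t) = |s - t| * dist (γ 0) (γ 1)

def GeodesicSpace (X : Type*) [MetricSpace X] : Prop :=
  ∀ x y : X, ∃ γ : ℝ → X, γ 0 = x ∧ γ 1 = y ∧ IsGeodesicSegment γ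

def CAT0 (X : Type*) [MetricSpace X] : Prop :=
  GeodesicSpace X ∧ ∀ γ : ℝ → X, IsGeodesicSegment γ → ∀ z : X, ∀ t ∈ Set.Icc (0:ℝ) 1,
    dist (γ t) z ^ 2 ≤ (1 - t) * dist (γ 0) z ^ 2 + t * dist (γ 1) z ^ 2
      - t * (1 - t) * dist (γ 0) (γ 1) ^ 2

/-- A geodesic segment lying in a set `S`. -/
def GeodesicIn {X : Type*} [MetricSpace X] (S : Set X) (γ : ℝ → X) : Prop :=
  IsGeodesicSegment γ ∧ ∀ t ∈ Set.Icc (0:ℝ) 1, γ t ∈ S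

/-- A geodesic `γ` in `S` is extendable in `S` if some geodesic `γ'` in `S` contains `γ` in
its interior. -/
def ExtendableIn {X : Type*} [MetricSpace X] (S : Set X) (γ : ℝ → X) : Prop :=
  ∃ γ' : ℝ → X, GeodesicIn S γ' ∧ γ '' Set.Icc 0 1 ⊆ γ' '' Set.Ioo 0 1

/-- `S` has the geodesic extension property if every geodesic in `S` is extendable in `S`. -/
def GeodesicExtensionProperty {X : Type*} [MetricSpace X] (S : Set X) : Prop :=
  ∀ γ : ℝ → X, GeodesicIn S γ → ExtendableIn S γ

/-- A CAT(0) space satisfies the geodesic extension property iff it satisfies the local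
geodesic extension property. -/

lemma geo_sub {X : Type*} [MetricSpace X] {γ : ℝ → X} (h : IsGeodesicSegment γ)
    {a b : ℝ} (ha : a ∈ Set.Icc (0:ℝ) 1) (hb : b ∈ Set.Icc (0:ℝ) 1) :
    IsGeodesicSegment (fun u => γ (a + u * (b - a))) := by
  have hmem : ∀ u ∈ Set.Icc (0:ℝ) 1, a + u * (b - a) ∈ Set.Icc (0:ℝ) 1 := by
    intro u hu
    constructor <;> nlinarith [ha.1, ha.2, hb.1, hb.2, hu.1, hu.2]
  intro s hs t ht
  show dist (γ (a + s * (b - a))) (γ (a + t * (b - a)))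
      = |s - t| * dist (γ (a + 0 * (b - a))) (γ (a + 1 * (b - a)))
  rw [show a + (0:ℝ) * (b - a) = a by ring, show a + (1:ℝ) * (b - a) = b by ring,
    h _ (hmem s hs) _ (hmem t ht), h a ha b hb,
    show a + s * (b - a) - (a + t * (b - a)) = (s - t) * (b - a) by ring,
    abs_mul, abs_sub_comm a b]
  ring

lemma geo_reverse {X : Type*} [MetricSpace X] {γ : ℝ → X} (h : IsGeodesicSegment γ) :
    IsGeodesicSegment (fun t => γ (1 - t)) := by
  intro s hs t ht
  show dist (γ (1 - s)) (γ (1 - t)) = |s - t| * dist (γ (1 - 0)) (γ (1 - 1))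
  have hm : ∀ u ∈ Set.Icc (0:ℝ) 1, 1 - u ∈ Set.Icc (0:ℝ) 1 := by
    intro u hu; exact ⟨by linarith [hu.2], by linarith [hu.1]⟩
  rw [show (1:ℝ) - 0 = 1 by norm_num, show (1:ℝ) - 1 = 0 by norm_num,
    h _ (hm s hs) _ (hm t ht), dist_comm (γ 1) (γ 0),
    show (1 - s) - (1 - t) = -(s - t) by ring, abs_neg]

lemma convexity {X : Type*} [MetricSpace X] (hX : CAT0 X) {γ : ℝ → X}
    (h : IsGeodesicSegment γ) (z : X) {t : ℝ} (ht : t ∈ Set.Icc (0:ℝ) 1) :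
    dist (γ t) z ≤ (1 - t) * dist (γ 0) z + t * dist (γ 1) z := by
  have h1 := hX.2 γ h z t ht
  have h2 : |dist (γ 0) z - dist (γ 1) z| ≤ dist (γ 0) (γ 1) := abs_dist_sub_le _ _ _
  have h2' : (dist (γ 0) z - dist (γ 1) z) ^ 2 ≤ dist (γ 0) (γ 1) ^ 2 := by
    nlinarith [abs_nonneg (dist (γ 0) z - dist (γ 1) z),
      sq_abs (dist (γ 0) z - dist (γ 1) z), dist_nonneg (x := γ 0) (y := γ 1)]
  nlinarith [dist_nonneg (x := γ t) (y := z), ht.1, ht.2,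
    dist_nonneg (x := γ 0) (y := z), dist_nonneg (x := γ 1) (y := z),
    mul_nonneg ht.1 (dist_nonneg (x := γ 1) (y := z)),
    mul_nonneg (sub_nonneg.2 ht.2) (dist_nonneg (x := γ 0) (y := z)),
    mul_nonneg (mul_nonneg ht.1 (sub_nonneg.2 ht.2)) (sub_nonneg.2 h2')]

lemma extend_beyond {X : Type*} [MetricSpace X] (hX : CAT0 X) {γ : ℝ → X}
    (h : IsGeodesicSegment γ) {s : ℝ} (hs0 : 0 ≤ s) (hs1 : s < 1) {z : X}
    (hz : dist (γ s) z = (1 - s) * dist (γ 0) (γ 1) + dist (γ 1) z) :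
    ∀ t ∈ Set.Icc (0:ℝ) 1, dist (γ t) z = (1 - t) * dist (γ 0) (γ 1) + dist (γ 1) z := by
  intro t ht
  have h11 : (1:ℝ) ∈ Set.Icc (0:ℝ) 1 := by norm_num
  have hsm : s ∈ Set.Icc (0:ℝ) 1 := ⟨hs0, hs1.le⟩
  have hts : dist (γ t) (γ 1) = (1 - t) * dist (γ 0) (γ 1) := by
    rw [h t ht 1 h11, abs_of_nonpos (by linarith [ht.2])]; ring
  have hub : dist (γ t) z ≤ (1 - t) * dist (γ 0) (γ 1) + dist (γ 1) z := by
    have := dist_triangle (γ t) (γ 1) z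
    linarith [hts ▸ this]
  rcases le_or_gt s t with hst | hst
  · have htr := dist_triangle (γ s) (γ t) z
    have hst' : dist (γ s) (γ t) = (t - s) * dist (γ 0) (γ 1) := by
      rw [h s hsm t ht, abs_of_nonpos (by linarith)]; ring
    rw [hst'] at htr
    linarith
  · have h1t : (0:ℝ) < 1 - t := by linarith
    have h1s : (0:ℝ) < 1 - s := by linarith
    have h1t' : (1:ℝ) - t ≠ 0 := ne_of_gt h1t
    set u₀ : ℝ := (s - t) / (1 - t) with hu₀def
    have hu₀mem : u₀ ∈ Set.Icc (0:ℝ) 1 := by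
      constructor
      · exact div_nonneg (by linarith) h1t.le
      · rw [div_le_one h1t]; linarith
    have hδ := geo_sub h ht h11
    have conv := convexity hX hδ z hu₀mem
    have e0 : t + (0:ℝ) * (1 - t) = t := by ring
    have e1 : t + (1:ℝ) * (1 - t) = 1 := by ring
    have es : t + u₀ * (1 - t) = s := by
      rw [hu₀def, div_mul_cancel₀ _ h1t']; ring
    simp only [e0, e1, es] at conv
    have eq2 : (1 - t) * ((1 - u₀) * dist (γ t) z + u₀ * dist (γ 1) z)
        = (1 - s) * dist (γ t) z + (s - t) * dist (γ 1) z := by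
      rw [hu₀def]; field_simp
      ring
    have conv' := mul_le_mul_of_nonneg_left conv h1t.le
    rw [eq2] at conv'
    nlinarith [conv', hz, h1s, hub]

lemma end_extension {X : Type*} [MetricSpace X] {γ : ℝ → X}
    (h : IsGeodesicSegment γ) (hl : 0 < dist (γ 0) (γ 1)) {r : ℝ} (hr : 0 < r)
    (hgep : GeodesicExtensionProperty (Metric.ball (γ 1) r)) :
    ∃ (τ : ℝ → X) (s a b : ℝ), IsGeodesicSegment τ ∧ 0 ≤ s ∧ s < 1 ∧
      0 ≤ a ∧ a < b ∧ b < 1 ∧ τ a = γ s ∧ τ b = γ 1 := by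
  set ℓ := dist (γ 0) (γ 1) with hℓ
  set δ : ℝ := min 1 (r / (2 * ℓ)) with hδdef
  have hδ0 : 0 < δ := lt_min one_pos (by positivity)
  have hδ1 : δ ≤ 1 := min_le_left _ _
  have hδr : δ * ℓ < r := by
    have h1 : δ ≤ r / (2 * ℓ) := min_le_right _ _
    have : δ * ℓ ≤ (r / (2 * ℓ)) * ℓ := mul_le_mul_of_nonneg_right h1 hl.le
    have h2 : (r / (2 * ℓ)) * ℓ = r / 2 := by field_simp
    linarith
  set s : ℝ := 1 - δ with hsdef
  have hs0 : 0 ≤ s := by simp only [hsdef]; linarith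
  have hs1 : s < 1 := by simp only [hsdef]; linarith
  have hsm : s ∈ Set.Icc (0:ℝ) 1 := ⟨hs0, hs1.le⟩
  have h11 : (1:ℝ) ∈ Set.Icc (0:ℝ) 1 := by norm_num
  set σ : ℝ → X := fun u => γ (s + u * (1 - s)) with hσdef
  have hσ : IsGeodesicSegment σ := geo_sub h hsm h11
  have hσin : GeodesicIn (Metric.ball (γ 1) r) σ := by
    refine ⟨hσ, fun u hu => ?_⟩
    have harg : s + u * (1 - s) ∈ Set.Icc (0:ℝ) 1 := by
      constructor <;> nlinarith [hu.1, hu.2]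
    have hd : dist (σ u) (γ 1) = (1 - (s + u * (1 - s))) * ℓ := by
      show dist (γ (s + u * (1 - s))) (γ 1) = _
      rw [h _ harg 1 h11, abs_of_nonpos (by linarith [harg.2])]; ring
    rw [Metric.mem_ball, hd]
    have : (1 - (s + u * (1 - s))) * ℓ ≤ δ * ℓ := by
      apply mul_le_mul_of_nonneg_right _ hl.le
      simp only [hsdef]; nlinarith [hu.1, hu.2]
    linarith
  obtain ⟨τ₀, ⟨hτgeo, _⟩, hsub⟩ := hgep σ hσin
  have h0mem : σ 0 ∈ τ₀ '' Set.Ioo 0 1 :=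
    hsub ⟨0, by norm_num, rfl⟩
  have h1mem : σ 1 ∈ τ₀ '' Set.Ioo 0 1 :=
    hsub ⟨1, by norm_num, rfl⟩
  obtain ⟨a₀, ha₀, ha₀eq⟩ := h0mem
  obtain ⟨b₀, hb₀, hb₀eq⟩ := h1mem
  have hσ0 : σ 0 = γ s := by show γ (s + 0 * (1 - s)) = γ s; norm_num
  have hσ1 : σ 1 = γ 1 := by
    show γ (s + 1 * (1 - s)) = γ 1
    congr 1; ring
  have hdist : dist (τ₀ a₀) (τ₀ b₀) = δ * ℓ := by
    rw [ha₀eq, hb₀eq, hσ0, hσ1, h s hsm 1 h11, abs_of_nonpos (by linarith)]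
    simp only [hsdef]; ring
  have hne : a₀ ≠ b₀ := by
    intro hab
    rw [hab, dist_self] at hdist
    nlinarith
  rcases hne.lt_or_gt with hab | hab
  · exact ⟨τ₀, s, a₀, b₀, hτgeo, hs0, hs1, ha₀.1.le, hab, hb₀.2,
      ha₀eq.trans hσ0, hb₀eq.trans hσ1⟩
  · refine ⟨fun t => τ₀ (1 - t), s, 1 - a₀, 1 - b₀, geo_reverse hτgeo, hs0, hs1,
      by linarith [ha₀.2], by linarith, by linarith [hb₀.1], ?_, ?_⟩
    · show τ₀ (1 - (1 - a₀)) = γ s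
      rw [show 1 - (1 - a₀) = a₀ by ring, ha₀eq, hσ0]
    · show τ₀ (1 - (1 - b₀)) = γ 1
      rw [show 1 - (1 - b₀) = b₀ by ring, hb₀eq, hσ1]

lemma beyond_formula {X : Type*} [MetricSpace X] (hX : CAT0 X) {γ τ : ℝ → X}
    (h : IsGeodesicSegment γ) (hτ : IsGeodesicSegment τ)
    {s a b : ℝ} (hs0 : 0 ≤ s) (hs1 : s < 1) (ha : 0 ≤ a) (hab : a < b) (hb : b ≤ 1)
    (hτa : τ a = γ s) (hτb : τ b = γ 1) :
    ∀ u ∈ Set.Icc (0:ℝ) 1, ∀ t ∈ Set.Icc (0:ℝ) 1,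
      dist (γ t) (τ (b + u * (1 - b)))
        = (1 - t) * dist (γ 0) (γ 1) + u * ((1 - b) * dist (τ 0) (τ 1)) := by
  intro u hu t ht
  set ℓ := dist (γ 0) (γ 1)
  set Lτ := dist (τ 0) (τ 1)
  have ham : a ∈ Set.Icc (0:ℝ) 1 := ⟨ha, by linarith⟩
  have hbm : b ∈ Set.Icc (0:ℝ) 1 := ⟨by linarith, hb⟩
  have hpm : b + u * (1 - b) ∈ Set.Icc (0:ℝ) 1 := by
    constructor <;> nlinarith [hu.1, hu.2]
  have h11 : (1:ℝ) ∈ Set.Icc (0:ℝ) 1 := by norm_num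
  have hsm : s ∈ Set.Icc (0:ℝ) 1 := ⟨hs0, hs1.le⟩
  have e1 : dist (τ a) (τ (b + u * (1 - b))) = (b + u * (1 - b) - a) * Lτ := by
    rw [hτ a ham _ hpm, abs_of_nonpos (by nlinarith [hu.1])]; ring
  have e2 : dist (τ b) (τ (b + u * (1 - b))) = u * (1 - b) * Lτ := by
    rw [hτ b hbm _ hpm, abs_of_nonpos (by nlinarith [hu.1])]; ring
  have e3 : dist (τ a) (τ b) = (b - a) * Lτ := by
    rw [hτ a ham b hbm, abs_of_nonpos (by linarith)]; ring
  have e4 : dist (γ s) (γ 1) = (1 - s) * ℓ := by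
    rw [h s hsm 1 h11, abs_of_nonpos (by linarith)]; ring
  have e5 : (b - a) * Lτ = (1 - s) * ℓ := by rw [← e3, ← e4, hτa, hτb]
  have hz : dist (γ s) (τ (b + u * (1 - b)))
      = (1 - s) * ℓ + dist (γ 1) (τ (b + u * (1 - b))) := by
    rw [← hτa, ← hτb, e1, e2]
    linarith
  have key := extend_beyond hX h hs0 hs1 hz t ht
  have e2' : dist (γ 1) (τ (b + u * (1 - b))) = u * (1 - b) * Lτ := by
    rw [← hτb]; exact e2
  rw [key, e2']
  ring

lemma cross_dist {X : Type*} [MetricSpace X] (hX : CAT0 X) {γ τm τp : ℝ → X}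
    (h : IsGeodesicSegment γ) (hτm : IsGeodesicSegment τm) (hτp : IsGeodesicSegment τp)
    {sm am bm sp ap bp : ℝ}
    (hsm0 : 0 ≤ sm) (hsm1 : sm < 1) (ham : 0 ≤ am) (hamb : am < bm) (hbm : bm ≤ 1)
    (hτma : τm am = γ (1 - sm)) (hτmb : τm bm = γ 0)
    (hsp0 : 0 ≤ sp) (hsp1 : sp < 1) (hap : 0 ≤ ap) (hapb : ap < bp) (hbp : bp ≤ 1)
    (hτpa : τp ap = γ sp) (hτpb : τp bp = γ 1)
    (hl : 0 < dist (γ 0) (γ 1)) :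
    ∀ u ∈ Set.Icc (0:ℝ) 1, ∀ v ∈ Set.Icc (0:ℝ) 1,
      dist (τm (bm + u * (1 - bm))) (τp (bp + v * (1 - bp)))
        = u * ((1 - bm) * dist (τm 0) (τm 1)) + dist (γ 0) (γ 1)
          + v * ((1 - bp) * dist (τp 0) (τp 1)) := by
  intro u hu v hv
  set ℓ := dist (γ 0) (γ 1)
  set Lm := dist (τm 0) (τm 1)
  set Lp := dist (τp 0) (τp 1)
  have h00 : (0:ℝ) ∈ Set.Icc (0:ℝ) 1 := by norm_num
  have h1sm : (1 - sm) ∈ Set.Icc (0:ℝ) 1 := ⟨by linarith, by linarith⟩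
  have Fp := beyond_formula hX h hτp hsp0 hsp1 hap hapb hbp hτpa hτpb v hv
  have Fp0 : dist (γ 0) (τp (bp + v * (1 - bp))) = ℓ + v * ((1 - bp) * Lp) := by
    have := Fp 0 h00; rw [this]; ring
  have Fps : dist (γ (1 - sm)) (τp (bp + v * (1 - bp)))
      = sm * ℓ + v * ((1 - bp) * Lp) := by
    have := Fp (1 - sm) h1sm; rw [this]; ring
  -- distance from βm u to γ 0
  have hbmm : bm ∈ Set.Icc (0:ℝ) 1 := ⟨by linarith, hbm⟩
  have hpm : bm + u * (1 - bm) ∈ Set.Icc (0:ℝ) 1 := by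
    constructor <;> nlinarith [hu.1, hu.2]
  have e2 : dist (τm bm) (τm (bm + u * (1 - bm))) = u * (1 - bm) * Lm := by
    rw [hτm bm hbmm _ hpm, abs_of_nonpos (by nlinarith [hu.1])]; ring
  have e2' : dist (τm (bm + u * (1 - bm))) (γ 0) = u * (1 - bm) * Lm := by
    rw [← hτmb, dist_comm]; exact e2
  -- upper bound
  have hub : dist (τm (bm + u * (1 - bm))) (τp (bp + v * (1 - bp)))
      ≤ u * ((1 - bm) * Lm) + ℓ + v * ((1 - bp) * Lp) := by
    have htr := dist_triangle (τm (bm + u * (1 - bm))) (γ 0) (τp (bp + v * (1 - bp)))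
    rw [e2', Fp0] at htr
    linarith
  -- lower bound
  rcases eq_or_lt_of_le hu.1 with hu0 | hu0
  · -- u = 0
    have : bm + u * (1 - bm) = bm := by rw [← hu0]; ring
    rw [this, hτmb, Fp0, ← hu0]
    ring
  · -- u > 0 : convexity along τm
    set p : ℝ := bm + u * (1 - bm) with hpdef
    have hbmp : bm ≤ p := by nlinarith [hu.1]
    have hamm : am ∈ Set.Icc (0:ℝ) 1 := ⟨ham, by linarith⟩
    have hamp : am < p := by linarith
    have hpam : (0:ℝ) < p - am := by linarith
    set lam : ℝ := (bm - am) / (p - am) with hlamdef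
    have hlammem : lam ∈ Set.Icc (0:ℝ) 1 := by
      constructor
      · exact div_nonneg (by linarith) hpam.le
      · rw [div_le_one hpam]; linarith
    have hρ := geo_sub hτm hamm hpm
    have conv := convexity hX hρ (τp (bp + v * (1 - bp))) hlammem
    have eρ0 : am + (0:ℝ) * (p - am) = am := by ring
    have eρ1 : am + (1:ℝ) * (p - am) = p := by ring
    have eρl : am + lam * (p - am) = bm := by
      rw [hlamdef, div_mul_cancel₀ _ (ne_of_gt hpam)]; ring
    simp only [eρ0, eρ1, eρl] at conv
    rw [hτma, hτmb, Fp0, Fps] at conv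
    -- conv : ℓ + v*((1-bp)*Lp) ≤ (1-lam)*(sm*ℓ + v*((1-bp)*Lp)) + lam * D
    set D := dist (τm p) (τp (bp + v * (1 - bp))) with hDdef
    clear_value D
    have conv' := mul_le_mul_of_nonneg_left conv hpam.le
    have eq2 : (p - am) * ((1 - lam) * (sm * ℓ + v * ((1 - bp) * Lp)) + lam * D)
        = (p - bm) * (sm * ℓ + v * ((1 - bp) * Lp)) + (bm - am) * D := by
      rw [hlamdef]; field_simp
      ring
    rw [eq2] at conv'
    clear_value lam
    -- key relation : (bm - am) * Lm = (1 - sm) * ℓ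
    have e3 : dist (τm am) (τm bm) = (bm - am) * Lm := by
      rw [hτm am hamm bm hbmm, abs_of_nonpos (by linarith)]; ring
    have e4 : dist (γ (1 - sm)) (γ 0) = (1 - sm) * ℓ := by
      rw [h (1 - sm) h1sm 0 h00, abs_of_nonneg (by linarith)]; ring
    have e5 : (bm - am) * Lm = (1 - sm) * ℓ := by rw [← e3, ← e4, hτma, hτmb]
    have hA : (0:ℝ) < (bm - am) * Lm := by rw [e5]; nlinarith
    have hppbm : p - bm = u * (1 - bm) := by rw [hpdef]; ring
    -- multiply key relation appropriately and conclude
    have hAq : (p - bm) * ((bm - am) * Lm) = (p - bm) * ((1 - sm) * ℓ) := by rw [e5]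
    clear_value p
    clear_value ℓ Lm Lp
    have c5 : (bm - am) * (ℓ + v * ((1 - bp) * Lp) + (p - bm) * Lm) ≤ (bm - am) * D := by
      ring_nf at conv' hAq ⊢
      linarith [conv', hAq]
    have hbma : (0:ℝ) < bm - am := by linarith
    have c6 : ℓ + v * ((1 - bp) * Lp) + (p - bm) * Lm ≤ D :=
      le_of_mul_le_mul_left c5 hbma
    rw [hppbm] at c6
    linarith [hub, c6]

lemma global_of_local {X : Type*} [MetricSpace X] (hX : CAT0 X)
    (hloc : ∀ x : X, ∃ r > (0:ℝ), GeodesicExtensionProperty (Metric.ball x r)) :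
    GeodesicExtensionProperty (Set.univ : Set X) := by
  intro γ hγ
  obtain ⟨h, -⟩ := hγ
  have h00 : (0:ℝ) ∈ Set.Icc (0:ℝ) 1 := by norm_num
  have h11 : (1:ℝ) ∈ Set.Icc (0:ℝ) 1 := by norm_num
  rcases eq_or_lt_of_le (dist_nonneg (x := γ 0) (y := γ 1)) with hl | hl
  · -- degenerate: constant geodesic
    refine ⟨fun _ => γ 0, ⟨?_, fun _ _ => Set.mem_univ _⟩, ?_⟩
    · intro s hs t ht; simp [dist_self]
    · rintro y ⟨t, ht, rfl⟩
      refine ⟨1/2, by norm_num, ?_⟩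
      have hd : dist (γ 0) (γ t) = 0 := by
        rw [h 0 h00 t ht, ← hl]; ring
      exact dist_eq_zero.mp hd
  · -- nondegenerate
    set ℓ := dist (γ 0) (γ 1) with hℓdef
    -- plus end extension
    obtain ⟨rp, hrp, hgepp⟩ := hloc (γ 1)
    obtain ⟨τp, sp, ap, bp, hτp, hsp0, hsp1, hap, hapb, hbp, hτpa, hτpb⟩ :=
      end_extension h hl hrp hgepp
    -- minus end extension via reversal
    set γb : ℝ → X := fun t => γ (1 - t) with hγbdef
    have hγb : IsGeodesicSegment γb := geo_reverse h
    have hγb1 : γb 1 = γ 0 := by show γ (1 - 1) = γ 0; norm_num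
    have hγb0 : γb 0 = γ 1 := by show γ (1 - 0) = γ 1; norm_num
    have hγbd : dist (γb 0) (γb 1) = ℓ := by rw [hγb0, hγb1, dist_comm]
    obtain ⟨rm, hrm, hgepm⟩ := hloc (γ 0)
    rw [← hγb1] at hgepm
    obtain ⟨τm, sm, am, bm, hτm, hsm0, hsm1, ham, hamb, hbm, hτma, hτmb⟩ :=
      end_extension hγb (by rw [hγbd]; exact hl) hrm hgepm
    have hτma' : τm am = γ (1 - sm) := hτma
    have hτmb' : τm bm = γ 0 := by rw [hτmb, hγb1]
    set Lm := dist (τm 0) (τm 1) with hLmdef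
    set Lp := dist (τp 0) (τp 1) with hLpdef
    have hbmm : bm ∈ Set.Icc (0:ℝ) 1 := ⟨by linarith, hbm.le⟩
    have hbpm : bp ∈ Set.Icc (0:ℝ) 1 := ⟨by linarith, hbp.le⟩
    have hamm : am ∈ Set.Icc (0:ℝ) 1 := ⟨ham, by linarith⟩
    have hapm : ap ∈ Set.Icc (0:ℝ) 1 := ⟨hap, by linarith⟩
    have h1sm : (1 - sm) ∈ Set.Icc (0:ℝ) 1 := ⟨by linarith, by linarith⟩
    have hspm : sp ∈ Set.Icc (0:ℝ) 1 := ⟨hsp0, hsp1.le⟩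
    -- positivity of Lm, Lp
    have e3m : dist (τm am) (τm bm) = (bm - am) * Lm := by
      rw [hτm am hamm bm hbmm, abs_of_nonpos (by linarith)]; ring
    have e4m : dist (γ (1 - sm)) (γ 0) = (1 - sm) * ℓ := by
      rw [h (1 - sm) h1sm 0 h00, abs_of_nonneg (by linarith)]; ring
    have e5m : (bm - am) * Lm = (1 - sm) * ℓ := by rw [← e3m, ← e4m, hτma', hτmb']
    have hLm : 0 < Lm := by nlinarith
    have e3p : dist (τp ap) (τp bp) = (bp - ap) * Lp := by
      rw [hτp ap hapm bp hbpm, abs_of_nonpos (by linarith)]; ring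
    have e4p : dist (γ sp) (γ 1) = (1 - sp) * ℓ := by
      rw [h sp hspm 1 h11, abs_of_nonpos (by linarith)]; ring
    have e5p : (bp - ap) * Lp = (1 - sp) * ℓ := by rw [← e3p, ← e4p, hτpa, hτpb]
    have hLp : 0 < Lp := by nlinarith
    -- key distance formulas
    have Fp : ∀ v ∈ Set.Icc (0:ℝ) 1, ∀ t ∈ Set.Icc (0:ℝ) 1,
        dist (γ t) (τp (bp + v * (1 - bp))) = (1 - t) * ℓ + v * ((1 - bp) * Lp) :=
      beyond_formula hX h hτp hsp0 hsp1 hap hapb hbp.le hτpa hτpb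
    have Fm0 : ∀ u ∈ Set.Icc (0:ℝ) 1, ∀ t ∈ Set.Icc (0:ℝ) 1,
        dist (γb t) (τm (bm + u * (1 - bm)))
          = (1 - t) * dist (γb 0) (γb 1) + u * ((1 - bm) * Lm) :=
      beyond_formula hX hγb hτm hsm0 hsm1 ham hamb hbm.le hτma hτmb
    have Fm : ∀ u ∈ Set.Icc (0:ℝ) 1, ∀ t ∈ Set.Icc (0:ℝ) 1,
        dist (γ t) (τm (bm + u * (1 - bm))) = t * ℓ + u * ((1 - bm) * Lm) := by
      intro u hu t ht
      have h1t : (1 - t) ∈ Set.Icc (0:ℝ) 1 := ⟨by linarith [ht.2], by linarith [ht.1]⟩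
      have := Fm0 u hu (1 - t) h1t
      have e : γb (1 - t) = γ t := by show γ (1 - (1 - t)) = γ t; congr 1; ring
      rw [e, hγbd] at this
      rw [this]; ring
    have Fc : ∀ u ∈ Set.Icc (0:ℝ) 1, ∀ v ∈ Set.Icc (0:ℝ) 1,
        dist (τm (bm + u * (1 - bm))) (τp (bp + v * (1 - bp)))
          = u * ((1 - bm) * Lm) + ℓ + v * ((1 - bp) * Lp) :=
      cross_dist hX h hτm hτp hsm0 hsm1 ham hamb hbm.le hτma' hτmb'
        hsp0 hsp1 hap hapb hbp.le hτpa hτpb hl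
    -- within-branch distances
    have F3m : ∀ u ∈ Set.Icc (0:ℝ) 1, ∀ v ∈ Set.Icc (0:ℝ) 1,
        dist (τm (bm + u * (1 - bm))) (τm (bm + v * (1 - bm)))
          = |u - v| * ((1 - bm) * Lm) := by
      intro u hu v hv
      have hβ := geo_sub hτm hbmm h11
      have := hβ u hu v hv
      simp only at this
      rw [this, show bm + 0 * (1 - bm) = bm by ring, show bm + 1 * (1 - bm) = (1:ℝ) by ring,
        hτm bm hbmm 1 h11, abs_of_nonpos (show bm - (1:ℝ) ≤ 0 by linarith)]
      ring
    have F3p : ∀ u ∈ Set.Icc (0:ℝ) 1, ∀ v ∈ Set.Icc (0:ℝ) 1,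
        dist (τp (bp + u * (1 - bp))) (τp (bp + v * (1 - bp)))
          = |u - v| * ((1 - bp) * Lp) := by
      intro u hu v hv
      have hβ := geo_sub hτp hbpm h11
      have := hβ u hu v hv
      simp only at this
      rw [this, show bp + 0 * (1 - bp) = bp by ring, show bp + 1 * (1 - bp) = (1:ℝ) by ring,
        hτp bp hbpm 1 h11, abs_of_nonpos (show bp - (1:ℝ) ≤ 0 by linarith)]
      ring
    -- abbreviations
    set dm := (1 - bm) * Lm with hdmdef
    set dp := (1 - bp) * Lp with hdpdef
    have hdm : 0 < dm := by rw [hdmdef]; exact mul_pos (by linarith) hLm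
    have hdp : 0 < dp := by rw [hdpdef]; exact mul_pos (by linarith) hLp
    clear_value dm dp
    clear hdmdef hdpdef
    clear_value ℓ Lm Lp
    set L := dm + ℓ + dp with hLdef
    have hL : 0 < L := by rw [hLdef]; linarith
    have hLne : L ≠ 0 := ne_of_gt hL
    clear_value L
    set t1 := dm / L with ht1def
    set t2 := (dm + ℓ) / L with ht2def
    have ht1L : t1 * L = dm := by rw [ht1def, div_mul_cancel₀ _ hLne]
    have ht2L : t2 * L = dm + ℓ := by rw [ht2def, div_mul_cancel₀ _ hLne]
    have h0t1 : 0 < t1 := div_pos hdm hL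
    have ht1t2 : t1 < t2 := by
      rw [ht1def, ht2def, div_lt_div_iff_of_pos_right hL]; linarith
    have ht2one : t2 < 1 := by
      rw [ht2def, div_lt_one hL, hLdef]; linarith
    have h12L : (t2 - t1) * L = ℓ := by linear_combination ht2L - ht1L
    have h2oL : (1 - t2) * L = dp := by linear_combination hLdef - ht2L
    have ht1ne : t1 ≠ 0 := ne_of_gt h0t1
    have h12ne : t2 - t1 ≠ 0 := ne_of_gt (by linarith)
    have h2one : (1:ℝ) - t2 ≠ 0 := ne_of_gt (by linarith)
    clear_value t1 t2
    set Γ : ℝ → X := fun t =>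
      if t < t1 then τm (bm + ((t1 - t) / t1) * (1 - bm))
      else if t ≤ t2 then γ ((t - t1) / (t2 - t1))
      else τp (bp + ((t - t2) / (1 - t2)) * (1 - bp)) with hΓdef
    have hΓm : ∀ t, t < t1 → Γ t = τm (bm + ((t1 - t) / t1) * (1 - bm)) := by
      intro t htl; rw [hΓdef]; simp only [if_pos htl]
    have hΓg : ∀ t, ¬ t < t1 → t ≤ t2 → Γ t = γ ((t - t1) / (t2 - t1)) := by
      intro t h1 h2; rw [hΓdef]; simp only [if_neg h1, if_pos h2]
    have hΓp : ∀ t, ¬ t < t1 → ¬ t ≤ t2 → Γ t = τp (bp + ((t - t2) / (1 - t2)) * (1 - bp)) := by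
      intro t h1 h2; rw [hΓdef]; simp only [if_neg h1, if_neg h2]
    -- membership helpers
    have memm : ∀ s, 0 ≤ s → s < t1 → (t1 - s) / t1 ∈ Set.Icc (0:ℝ) 1 := by
      intro s h0 h1
      exact ⟨div_nonneg (by linarith) h0t1.le, by rw [div_le_one h0t1]; linarith⟩
    have memg : ∀ s, t1 ≤ s → s ≤ t2 → (s - t1) / (t2 - t1) ∈ Set.Icc (0:ℝ) 1 := by
      intro s h0 h1
      exact ⟨div_nonneg (by linarith) (by linarith), by rw [div_le_one (by linarith)]; linarith⟩
    have memp : ∀ s, t2 < s → s ≤ 1 → (s - t2) / (1 - t2) ∈ Set.Icc (0:ℝ) 1 := by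
      intro s h0 h1
      exact ⟨div_nonneg (by linarith) (by linarith), by rw [div_le_one (by linarith)]; linarith⟩
    -- scaling helpers
    have sc1 : ∀ a : ℝ, a / t1 * dm = a * L := by
      intro a; rw [← ht1L, div_mul_eq_mul_div, mul_comm t1 L, ← mul_assoc,
        mul_div_assoc, div_self ht1ne, mul_one]
    have sc2 : ∀ a : ℝ, a / (t2 - t1) * ℓ = a * L := by
      intro a; rw [← h12L, div_mul_eq_mul_div, mul_comm (t2 - t1) L, ← mul_assoc,
        mul_div_assoc, div_self h12ne, mul_one]
    have sc3 : ∀ a : ℝ, a / (1 - t2) * dp = a * L := by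
      intro a; rw [← h2oL, div_mul_eq_mul_div, mul_comm (1 - t2) L, ← mul_assoc,
        mul_div_assoc, div_self h2one, mul_one]
    -- the key distance computation
    have key : ∀ s ∈ Set.Icc (0:ℝ) 1, ∀ t ∈ Set.Icc (0:ℝ) 1, s ≤ t →
        dist (Γ s) (Γ t) = (t - s) * L := by
      intro s hs t ht hst
      by_cases hsc : s < t1
      · by_cases htc : t < t1
        · rw [hΓm s hsc, hΓm t htc,
            F3m _ (memm s hs.1 hsc) _ (memm t ht.1 htc)]
          rw [show (t1 - s) / t1 - (t1 - t) / t1 = (t - s) / t1 by ring,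
            abs_of_nonneg (div_nonneg (by linarith) h0t1.le)]
          exact sc1 _
        · by_cases htc2 : t ≤ t2
          · rw [hΓm s hsc, hΓg t htc htc2, dist_comm,
              Fm _ (memm s hs.1 hsc) _ (memg t (not_lt.mp htc) htc2)]
            linarith [sc1 (t1 - s), sc2 (t - t1)]
          · rw [hΓm s hsc, hΓp t htc htc2,
              Fc _ (memm s hs.1 hsc) _ (memp t (not_le.mp htc2) ht.2)]
            linarith [sc1 (t1 - s), sc3 (t - t2)]
      · by_cases hsc2 : s ≤ t2
        · by_cases htc2 : t ≤ t2
          · have htc : ¬ t < t1 := by intro hc; exact hsc (lt_of_le_of_lt hst hc)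
            rw [hΓg s hsc hsc2, hΓg t htc htc2,
              h _ (memg s (not_lt.mp hsc) hsc2) _ (memg t (not_lt.mp htc) htc2)]
            rw [show (s - t1) / (t2 - t1) - (t - t1) / (t2 - t1) = -((t - s) / (t2 - t1)) by ring,
              abs_neg, abs_of_nonneg (div_nonneg (by linarith) (by linarith)), ← hℓdef]
            exact sc2 _
          · rw [hΓg s hsc hsc2, hΓp t (fun hc => hsc (lt_of_le_of_lt hst hc)) htc2,
              Fp _ (memp t (not_le.mp htc2) ht.2) _ (memg s (not_lt.mp hsc) hsc2)]
            have e : 1 - (s - t1) / (t2 - t1) = (t2 - s) / (t2 - t1) := by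
              field_simp
              ring
            rw [e]
            linarith [sc2 (t2 - s), sc3 (t - t2)]
        · have htc2 : ¬ t ≤ t2 := fun hc => hsc2 (le_trans hst hc)
          rw [hΓp s hsc hsc2, hΓp t (fun hc => hsc (lt_of_le_of_lt hst hc)) htc2,
            F3p _ (memp s (not_le.mp hsc2) hs.2) _ (memp t (not_le.mp htc2) ht.2)]
          rw [show (s - t2) / (1 - t2) - (t - t2) / (1 - t2) = -((t - s) / (1 - t2)) by ring,
            abs_neg, abs_of_nonneg (div_nonneg (by linarith) (by linarith))]
          exact sc3 _
    -- assemble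
    have h01L : dist (Γ 0) (Γ 1) = L := by
      have := key 0 h00 1 h11 zero_le_one
      simpa using this
    have hΓgeo : IsGeodesicSegment Γ := by
      intro s hs t ht
      rcases le_total s t with h' | h'
      · rw [key s hs t ht h', h01L, abs_of_nonpos (show s - t ≤ 0 by linarith)]
        try ring
      · rw [dist_comm, key t ht s hs h', h01L, abs_of_nonneg (show 0 ≤ s - t by linarith)]
        try ring
    refine ⟨Γ, ⟨hΓgeo, fun _ _ => Set.mem_univ _⟩, ?_⟩
    rintro y ⟨t, ht, rfl⟩
    have hb0 : 0 ≤ t * (t2 - t1) := mul_nonneg ht.1 (by linarith)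
    have hb1 : t * (t2 - t1) ≤ t2 - t1 := by nlinarith [ht.2]
    have hn : ¬ t1 + t * (t2 - t1) < t1 := by linarith
    have hle : t1 + t * (t2 - t1) ≤ t2 := by linarith
    have hmem : t1 + t * (t2 - t1) ∈ Set.Ioo (0:ℝ) 1 := ⟨by linarith, by linarith⟩
    have hval : Γ (t1 + t * (t2 - t1)) = γ t := by
      rw [hΓg _ hn hle]
      congr 1
      field_simp
      ring
    exact ⟨_, hmem, hval⟩

lemma forward_aux {X : Type*} [MetricSpace X] (hX : CAT0 X) {γ γ' : ℝ → X}
    (hγ : IsGeodesicSegment γ) (hγ' : IsGeodesicSegment γ') {x : X}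
    (hball : ∀ t ∈ Set.Icc (0:ℝ) 1, γ t ∈ Metric.ball x 1)
    (hsub : γ '' Set.Icc 0 1 ⊆ γ' '' Set.Ioo 0 1)
    {t₀ t₁ : ℝ} (h0 : γ' t₀ = γ 0) (h1 : γ' t₁ = γ 1)
    (ht₀ : t₀ ∈ Set.Ioo (0:ℝ) 1) (ht₁ : t₁ ∈ Set.Ioo (0:ℝ) 1) (hlt : t₀ < t₁)
    (hL : 0 < dist (γ' 0) (γ' 1)) :
    ExtendableIn (Metric.ball x 1) γ := by
  have h00 : (0:ℝ) ∈ Set.Icc (0:ℝ) 1 := by norm_num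
  have h11 : (1:ℝ) ∈ Set.Icc (0:ℝ) 1 := by norm_num
  set L := dist (γ' 0) (γ' 1) with hLdef
  set ℓ := dist (γ 0) (γ 1) with hℓdef
  have ht₀m : t₀ ∈ Set.Icc (0:ℝ) 1 := ⟨ht₀.1.le, ht₀.2.le⟩
  have ht₁m : t₁ ∈ Set.Icc (0:ℝ) 1 := ⟨ht₁.1.le, ht₁.2.le⟩
  have hℓL : ℓ = (t₁ - t₀) * L := by
    rw [hℓdef, ← h0, ← h1, hγ' t₀ ht₀m t₁ ht₁m,
      abs_of_nonpos (show t₀ - t₁ ≤ 0 by linarith)]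
    ring
  have hd0 : dist (γ 0) x < 1 := Metric.mem_ball.mp (hball 0 h00)
  have hd1 : dist (γ 1) x < 1 := Metric.mem_ball.mp (hball 1 h11)
  set D := max (dist (γ 0) x) (dist (γ 1) x) with hDdef
  have hD : D < 1 := max_lt hd0 hd1
  have hD0 : dist (γ 0) x ≤ D := le_max_left _ _
  have hD1 : dist (γ 1) x ≤ D := le_max_right _ _
  have hD00 : 0 ≤ D := le_trans dist_nonneg hD0
  clear_value D
  set ε := min ((1 - D) / (2 * L)) (min (t₀ / 2) ((1 - t₁) / 2)) with hεdef
  have hε0 : 0 < ε := lt_min (div_pos (by linarith) (by linarith))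
    (lt_min (by linarith [ht₀.1]) (by linarith [ht₁.2]))
  have hεa : ε < t₀ := lt_of_le_of_lt (le_trans (min_le_right _ _) (min_le_left _ _))
    (by linarith [ht₀.1])
  have hεb : ε < 1 - t₁ := lt_of_le_of_lt (le_trans (min_le_right _ _) (min_le_right _ _))
    (by linarith [ht₁.2])
  have hεL : ε * L ≤ (1 - D) / 2 := by
    have h1 : ε ≤ (1 - D) / (2 * L) := min_le_left _ _
    have h2 : ε * L ≤ ((1 - D) / (2 * L)) * L := mul_le_mul_of_nonneg_right h1 hL.le
    have h3 : ((1 - D) / (2 * L)) * L = (1 - D) / 2 := by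
      field_simp
      all_goals ring
    linarith
  clear_value ε
  set a' := t₀ - ε with ha'def
  set b' := t₁ + ε with hb'def
  have ha'0 : 0 < a' := by rw [ha'def]; linarith
  have ha't₀ : a' < t₀ := by rw [ha'def]; linarith
  have hb't₁ : t₁ < b' := by rw [hb'def]; linarith
  have hb'1 : b' < 1 := by rw [hb'def]; linarith
  have ha'm : a' ∈ Set.Icc (0:ℝ) 1 := ⟨ha'0.le, by linarith⟩
  have hb'm : b' ∈ Set.Icc (0:ℝ) 1 := ⟨by linarith, hb'1.le⟩
  have hdista : dist (γ' a') (γ' t₀) = (t₀ - a') * L := by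
    rw [hγ' a' ha'm t₀ ht₀m, abs_of_nonpos (show a' - t₀ ≤ 0 by linarith)]; ring
  have hdistb : dist (γ' b') (γ' t₁) = (b' - t₁) * L := by
    rw [hγ' b' hb'm t₁ ht₁m, abs_of_nonneg (show 0 ≤ b' - t₁ by linarith)]
    all_goals ring
  have hina : dist (γ' a') x < 1 := by
    have htr := dist_triangle (γ' a') (γ' t₀) x
    rw [hdista, h0] at htr
    have : (t₀ - a') * L = ε * L := by rw [ha'def]; ring
    linarith
  have hinb : dist (γ' b') x < 1 := by
    have htr := dist_triangle (γ' b') (γ' t₁) x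
    rw [hdistb, h1] at htr
    have : (b' - t₁) * L = ε * L := by rw [hb'def]; ring
    linarith
  clear_value a' b'
  set Γ : ℝ → X := fun u => γ' (a' + u * (b' - a')) with hΓdef
  have hΓgeo : IsGeodesicSegment Γ := geo_sub hγ' ha'm hb'm
  have hΓ0 : Γ 0 = γ' a' := by show γ' (a' + 0 * (b' - a')) = γ' a'; norm_num
  have hΓ1 : Γ 1 = γ' b' := by show γ' (a' + 1 * (b' - a')) = γ' b'; congr 1; ring
  refine ⟨Γ, ⟨hΓgeo, ?_⟩, ?_⟩
  · intro u hu
    have conv := convexity hX hΓgeo x hu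
    rw [hΓ0, hΓ1] at conv
    rw [Metric.mem_ball]
    have e1 : 0 ≤ (1 - u) := by linarith [hu.2]
    have e2 : (1 - u) * dist (γ' a') x ≤ (1 - u) * 1 := by
      apply mul_le_mul_of_nonneg_left hina.le e1
    have e3 : u * dist (γ' b') x ≤ u * 1 := by
      apply mul_le_mul_of_nonneg_left hinb.le hu.1
    rcases eq_or_lt_of_le hu.1 with h' | h'
    · rw [← h'] at conv ⊢
      simpa using lt_of_le_of_lt (by simpa using conv) hina
    · have : u * dist (γ' b') x < u * 1 := by
        apply mul_lt_mul_of_pos_left hinb h'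
      nlinarith [conv]
  · rintro y ⟨t, ht, rfl⟩
    obtain ⟨u, hu, huy⟩ := hsub ⟨t, ht, rfl⟩
    -- locate u between t₀ and t₁
    have e1 : dist (γ' u) (γ' t₀) = dist (γ t) (γ 0) := by rw [huy, h0]
    have e2 : dist (γ' u) (γ' t₁) = dist (γ t) (γ 1) := by rw [huy, h1]
    have hum : u ∈ Set.Icc (0:ℝ) 1 := ⟨hu.1.le, hu.2.le⟩
    have f1 : |u - t₀| * L = t * ℓ := by
      rw [← hγ' u hum t₀ ht₀m, e1, hγ t ht 0 h00, sub_zero, abs_of_nonneg ht.1]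
    have f2 : |u - t₁| * L = (1 - t) * ℓ := by
      rw [← hγ' u hum t₁ ht₁m, e2, hγ t ht 1 h11,
        abs_of_nonpos (show t - 1 ≤ 0 by linarith [ht.2])]; ring
    clear_value L ℓ
    have hut₀ : t₀ ≤ u := by
      by_contra hc
      push_neg at hc
      rw [abs_of_nonpos (show u - t₀ ≤ 0 by linarith)] at f1
      rw [abs_of_nonpos (show u - t₁ ≤ 0 by linarith)] at f2
      have mp : 0 < (t₀ - u) * L := mul_pos (by linarith) hL
      ring_nf at f1 f2 hℓL mp
      linarith [f1, f2, hℓL, mp]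
    have hut₁ : u ≤ t₁ := by
      by_contra hc
      push_neg at hc
      rw [abs_of_nonneg (show 0 ≤ u - t₀ by linarith)] at f1
      rw [abs_of_nonneg (show 0 ≤ u - t₁ by linarith)] at f2
      have mp : 0 < (u - t₁) * L := mul_pos (by linarith) hL
      ring_nf at f1 f2 hℓL mp
      linarith [f1, f2, hℓL, mp]
    have hba : (0:ℝ) < b' - a' := by linarith
    refine ⟨(u - a') / (b' - a'), ⟨div_pos (by linarith) hba, ?_⟩, ?_⟩
    · rw [div_lt_one hba]; linarith
    · show γ' (a' + (u - a') / (b' - a') * (b' - a')) = γ t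
      rw [div_mul_cancel₀ _ (ne_of_gt hba), show a' + (u - a') = u by ring]
      exact huy

/-- A CAT(0) space satisfies the geodesic extension property iff it satisfies the local
geodesic extension property. -/
theorem geodesicExtension_iff_local
    {X : Type*} [MetricSpace X] (hX : CAT0 X) :
    GeodesicExtensionProperty (Set.univ : Set X) ↔
      ∀ x : X, ∃ r > (0:ℝ), GeodesicExtensionProperty (Metric.ball x r) := by
  constructor
  · -- global implies local
    intro hglob x
    refine ⟨1, one_pos, ?_⟩
    intro γ hγ
    obtain ⟨hγgeo, hγball⟩ := hγ
    have h00 : (0:ℝ) ∈ Set.Icc (0:ℝ) 1 := by norm_num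
    have h11 : (1:ℝ) ∈ Set.Icc (0:ℝ) 1 := by norm_num
    rcases eq_or_lt_of_le (dist_nonneg (x := γ 0) (y := γ 1)) with hl | hl
    · -- degenerate geodesic: extend by the constant map
      refine ⟨fun _ => γ 0, ⟨?_, fun _ _ => hγball 0 h00⟩, ?_⟩
      · intro s hs t ht; simp [dist_self]
      · rintro y ⟨t, ht, rfl⟩
        refine ⟨1/2, by norm_num, ?_⟩
        have hd : dist (γ 0) (γ t) = 0 := by
          rw [hγgeo 0 h00 t ht, ← hl]; ring
        exact dist_eq_zero.mp hd
    · obtain ⟨γ', ⟨hγ'geo, -⟩, hsub⟩ := hglob γ ⟨hγgeo, fun _ _ => Set.mem_univ _⟩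
      obtain ⟨t₀, ht₀, h0⟩ := hsub ⟨0, h00, rfl⟩
      obtain ⟨t₁, ht₁, h1⟩ := hsub ⟨1, h11, rfl⟩
      have ht₀m : t₀ ∈ Set.Icc (0:ℝ) 1 := ⟨ht₀.1.le, ht₀.2.le⟩
      have ht₁m : t₁ ∈ Set.Icc (0:ℝ) 1 := ⟨ht₁.1.le, ht₁.2.le⟩
      have hdd : |t₀ - t₁| * dist (γ' 0) (γ' 1) = dist (γ 0) (γ 1) := by
        rw [← hγ'geo t₀ ht₀m t₁ ht₁m, h0, h1]
      have hL : 0 < dist (γ' 0) (γ' 1) := by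
        rcases eq_or_lt_of_le (dist_nonneg (x := γ' 0) (y := γ' 1)) with h' | h'
        · exfalso; rw [← h'] at hdd; nlinarith
        · exact h'
      have hne : t₀ ≠ t₁ := by
        intro he
        rw [he, sub_self, abs_zero, zero_mul] at hdd
        nlinarith
      rcases hne.lt_or_gt with hlt | hlt
      · exact forward_aux hX hγgeo hγ'geo hγball hsub h0 h1 ht₀ ht₁ hlt hL
      · -- reverse γ'
        set γ'' : ℝ → X := fun u => γ' (1 - u) with hγ''def
        have hγ'' : IsGeodesicSegment γ'' := geo_reverse hγ'geo
        have hsub'' : γ '' Set.Icc 0 1 ⊆ γ'' '' Set.Ioo 0 1 := by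
          intro y hy
          obtain ⟨u, hu, huy⟩ := hsub hy
          refine ⟨1 - u, ⟨by linarith [hu.2], by linarith [hu.1]⟩, ?_⟩
          show γ' (1 - (1 - u)) = y
          rw [show 1 - (1 - u) = u by ring]
          exact huy
        have h0'' : γ'' (1 - t₀) = γ 0 := by
          show γ' (1 - (1 - t₀)) = γ 0
          rw [show 1 - (1 - t₀) = t₀ by ring]; exact h0
        have h1'' : γ'' (1 - t₁) = γ 1 := by
          show γ' (1 - (1 - t₁)) = γ 1
          rw [show 1 - (1 - t₁) = t₁ by ring]; exact h1
        have hL'' : 0 < dist (γ'' 0) (γ'' 1) := by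
          have e0 : γ'' 0 = γ' 1 := by show γ' (1 - 0) = γ' 1; norm_num
          have e1 : γ'' 1 = γ' 0 := by show γ' (1 - 1) = γ' 0; norm_num
          rw [e0, e1, dist_comm]; exact hL
        exact forward_aux hX hγgeo hγ'' hγball hsub'' h0'' h1''
          ⟨by linarith [ht₀.2], by linarith [ht₀.1]⟩
          ⟨by linarith [ht₁.2], by linarith [ht₁.1]⟩ (by linarith) hL''
  · exact fun hloc => global_of_local hX hloc
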